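/- Consider a spring–mass network in ℝ^d (d = 2 or 3) with terminals B, interior nodes J carrying positive masses, and massless interior nodes L, with stiffness matrix K, mass matrices M_BB, M_JJ, and reduced stiffness matrix K̃ obtained by eliminating L. Suppose ω ∈ ℝ is such that ω² is not an eigenvalue of M_JJ^{−1/2} K̃_JJ M_JJ^{−1/2}. Then K̃_JJ − ω² M_JJ is invertible, and for every terminal displacement u_B there exist interior displacements u_J and u_L such that the vector (K − ω² M)(u_B, u_J, u_L) has zero components at all interior nodes (balance of forces at interior nodes), and its components at the terminal nodes equal W(ω) u_B, where W(ω) = K̃_BB − ω² M_BB − K̃_BJ (K̃_JJ − ω² M_JJ)^{−1} K̃_JB. -/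

import Mathlib

open scoped BigOperators
open Matrix

noncomputable section

/-- The Moore–Penrose pseudoinverse of a real square matrix, characterized by the
four Penrose conditions (it exists and is unique for every real matrix). -/
noncomputable def mpinv {n : Type*} [Fintype n] [DecidableEq n]
    (A : Matrix n n ℝ) : Matrix n n ℝ :=
  @dite _
    (∃ X : Matrix n n ℝ,
      A * X * A = A ∧ X * A * X = X ∧ (A * X)ᵀ = A * X ∧ (X * A)ᵀ = X * A)
    (Classical.propDecidable _) (fun h => h.choose) (fun _ => 0)

/-- Euclidean norm of a vector in `Fin d → ℝ`. -/
noncomputable def euclidNorm {d : ℕ} (v : Fin d → ℝ) : ℝ := Real.sqrt (∑ a, v a ^ 2)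

/-- Unit vector pointing from `p` towards `q`. -/
noncomputable def unitDir {d : ℕ} (p q : Fin d → ℝ) : Fin d → ℝ :=
  fun a => (euclidNorm (q - p))⁻¹ * (q a - p a)

/-- Stiffness matrix of a spring network with node positions `x` and spring
constants `k`: the `d × d` off-diagonal block coupling nodes `i ≠ j` is
`-k i j • n_{ij} n_{ij}ᵀ` and the `i`-th diagonal block is
`∑ j ≠ i, k i j • n_{ij} n_{ij}ᵀ`. -/
noncomputable def stiffness {d : ℕ} {ι : Type*} [Fintype ι] [DecidableEq ι]
    (x : ι → Fin d → ℝ) (k : ι → ι → ℝ) :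
    Matrix (ι × Fin d) (ι × Fin d) ℝ :=
  Matrix.of fun p q =>
    if p.1 = q.1 then
      ∑ j ∈ Finset.univ.filter (fun j => j ≠ p.1),
        k p.1 j * (unitDir (x p.1) (x j) p.2 * unitDir (x p.1) (x j) q.2)
    else
      -(k p.1 q.1 * (unitDir (x p.1) (x q.1) p.2 * unitDir (x p.1) (x q.1) q.2))

/-- `(x, k)` is a spring network: nodes are at distinct positions and the spring
constants are symmetric and nonnegative. -/
def IsSpringNetwork {d : ℕ} {ι : Type*} (x : ι → Fin d → ℝ) (k : ι → ι → ℝ) : Prop :=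
  Function.Injective x ∧ (∀ i j, k i j = k j i) ∧ (∀ i j, 0 ≤ k i j)

/-- The block of a matrix indexed by `(nodes × Fin d)` selected by the node
maps `f` and `g`. -/
def blk {d : ℕ} {ι κ₁ κ₂ : Type*} (K : Matrix (ι × Fin d) (ι × Fin d) ℝ)
    (f : κ₁ → ι) (g : κ₂ → ι) : Matrix (κ₁ × Fin d) (κ₂ × Fin d) ℝ :=
  K.submatrix (Prod.map f id) (Prod.map g id)

/-- Generalized Schur complement `K_BB - K_BI K_II† K_IB` eliminating the
interior nodes `I`. -/
noncomputable def schurResp {d : ℕ} {B I : Type*} [Fintype B] [Fintype I]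
    [DecidableEq B] [DecidableEq I]
    (K : Matrix ((B ⊕ I) × Fin d) ((B ⊕ I) × Fin d) ℝ) :
    Matrix (B × Fin d) (B × Fin d) ℝ :=
  blk K Sum.inl Sum.inl -
    blk K Sum.inl Sum.inr * mpinv (blk K Sum.inr Sum.inr) * blk K Sum.inr Sum.inl

/-- Static response matrix at the terminals `B` of the spring network `(x, k)`
with interior nodes `I`. -/
noncomputable def staticResponse {d : ℕ} {B I : Type*} [Fintype B] [Fintype I]
    [DecidableEq B] [DecidableEq I]
    (x : (B ⊕ I) → Fin d → ℝ) (k : (B ⊕ I) → (B ⊕ I) → ℝ) :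
    Matrix (B × Fin d) (B × Fin d) ℝ :=
  schurResp (stiffness x k)

/-- Balanced system of forces `f` supported at the points `x`: the total force
vanishes and the total torque vanishes (the torque being recorded as the
antisymmetric matrix `x_i ∧ f_i`, which for `d = 2` is equivalent to the scalar
wedge `u ∧ v = u 0 * v 1 - u 1 * v 0` and for `d = 3` to the cross product). -/
def IsBalanced {d : ℕ} {ι : Type*} [Fintype ι]
    (x f : ι → Fin d → ℝ) : Prop :=
  (∀ a, ∑ i, f i a = 0) ∧ ∀ a b, ∑ i, (x i a * f i b - x i b * f i a) = 0

/-- Planar wedge product. -/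
def wedge2 (u v : Fin 2 → ℝ) : ℝ := u 0 * v 1 - u 1 * v 0

/-- Cross product in `ℝ³`. -/
def cross3 (u v : Fin 3 → ℝ) : Fin 3 → ℝ :=
  ![u 1 * v 2 - u 2 * v 1, u 2 * v 0 - u 0 * v 2, u 0 * v 1 - u 1 * v 0]

/-- The `ε`-neighborhood `{y | dist (y, C) ≤ ε}` of a set `C` (for a closed set
`C`, membership is equivalent to being within Euclidean distance `ε` of some
point of `C`). -/
def epsNbhd {d : ℕ} (C : Set (Fin d → ℝ)) (ε : ℝ) : Set (Fin d → ℝ) :=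
  {y | ∃ z ∈ C, euclidNorm (y - z) ≤ ε}

/-- Combine terminal and interior displacements into a displacement of all
nodes. -/
def glue {d : ℕ} {B I : Type*} (uB : B × Fin d → ℝ) (uI : I × Fin d → ℝ) :
    (B ⊕ I) × Fin d → ℝ :=
  fun p => Sum.elim (fun b => uB (b, p.2)) (fun i => uI (i, p.2)) p.1

/-- The reduced stiffness matrix `K̃` at the nodes `B ⊕ J` of a spring–mass
network with massless interior nodes `L`, obtained by eliminating `L`. -/
noncomputable def dynKtilde {d : ℕ} {B J L : Type*} [Fintype B] [Fintype J] [Fintype L]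
    [DecidableEq B] [DecidableEq J] [DecidableEq L]
    (x : ((B ⊕ J) ⊕ L) → Fin d → ℝ) (k : ((B ⊕ J) ⊕ L) → ((B ⊕ J) ⊕ L) → ℝ) :
    Matrix ((B ⊕ J) × Fin d) ((B ⊕ J) × Fin d) ℝ :=
  schurResp (stiffness x k)

/-- The diagonal mass matrix `M_JJ` of the interior nodes with mass. -/
noncomputable def massJJ {d : ℕ} {B J L : Type*} [Fintype J] [DecidableEq J]
    (m : (B ⊕ J) ⊕ L → ℝ) : Matrix (J × Fin d) (J × Fin d) ℝ :=
  Matrix.diagonal fun p => m (Sum.inl (Sum.inr p.1))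

/-- The diagonal mass matrix `M_BB` of the terminal nodes. -/
noncomputable def massBB {d : ℕ} {B J L : Type*} [Fintype B] [DecidableEq B]
    (m : (B ⊕ J) ⊕ L → ℝ) : Matrix (B × Fin d) (B × Fin d) ℝ :=
  Matrix.diagonal fun p => m (Sum.inl (Sum.inl p.1))

/-- Dynamic response function
`W(ω) = K̃_BB - ω² M_BB - K̃_BJ (K̃_JJ - ω² M_JJ)⁻¹ K̃_JB` of a spring–mass
network with terminals `B`, interior nodes `J` carrying the masses `m` and
massless interior nodes `L`. -/
noncomputable def dynResponse {d : ℕ} {B J L : Type*} [Fintype B] [Fintype J] [Fintype L]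
    [DecidableEq B] [DecidableEq J] [DecidableEq L]
    (x : ((B ⊕ J) ⊕ L) → Fin d → ℝ) (k : ((B ⊕ J) ⊕ L) → ((B ⊕ J) ⊕ L) → ℝ)
    (m : (B ⊕ J) ⊕ L → ℝ) (ω : ℝ) : Matrix (B × Fin d) (B × Fin d) ℝ :=
  blk (dynKtilde x k) Sum.inl Sum.inl - ω ^ 2 • massBB m -
    blk (dynKtilde x k) Sum.inl Sum.inr *
      (blk (dynKtilde x k) Sum.inr Sum.inr - ω ^ 2 • massJJ m)⁻¹ *
      blk (dynKtilde x k) Sum.inr Sum.inl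

section Aux

variable {d : ℕ}

lemma euclidNorm_sub_symm (u v : Fin d → ℝ) : euclidNorm (u - v) = euclidNorm (v - u) := by
  unfold euclidNorm
  congr 1
  apply Finset.sum_congr rfl
  intro a _
  simp [Pi.sub_apply]
  ring

lemma unitDir_symm (p q : Fin d → ℝ) (a : Fin d) :
    unitDir q p a = - unitDir p q a := by
  unfold unitDir
  rw [euclidNorm_sub_symm p q]
  ring

lemma unitDir_symm_mul (p q : Fin d → ℝ) (a b : Fin d) :
    unitDir q p a * unitDir q p b = unitDir p q a * unitDir p q b := by
  rw [unitDir_symm p q a, unitDir_symm p q b]; ring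

variable {ι : Type*} [Fintype ι] [DecidableEq ι]

lemma stiffness_isHermitian (x : ι → Fin d → ℝ) (k : ι → ι → ℝ)
    (hk : ∀ i j, k i j = k j i) : (stiffness x k).IsHermitian := by
  apply Matrix.IsHermitian.ext
  rintro ⟨p, a⟩ ⟨q, b⟩
  rw [star_trivial]
  by_cases h : p = q
  · subst h
    simp only [stiffness, Matrix.of_apply, if_pos rfl]
    apply Finset.sum_congr rfl
    intro j _
    ring
  · simp only [stiffness, Matrix.of_apply, if_neg h, if_neg (Ne.symm h)]
    rw [hk q p, unitDir_symm_mul (x p) (x q)]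
    ring

/-- Rank-one factor of the pair `(i,j)` in the stiffness matrix. -/
noncomputable def gvec (x : ι → Fin d → ℝ) (i j : ι) : ι × Fin d → ℝ :=
  fun p => ((if p.1 = i then (1:ℝ) else 0) - (if p.1 = j then 1 else 0)) *
    unitDir (x i) (x j) p.2

lemma stiffness_eq_sum (x : ι → Fin d → ℝ) (k : ι → ι → ℝ)
    (hk : ∀ i j, k i j = k j i) :
    stiffness x k = ∑ i, ∑ j ∈ Finset.univ.filter (fun j => j ≠ i),
      (k i j / 2) • Matrix.vecMulVec (gvec x i j) (gvec x i j) := by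
  ext ⟨p, a⟩ ⟨q, b⟩
  simp only [Matrix.sum_apply, Matrix.smul_apply, Matrix.vecMulVec_apply, smul_eq_mul]
  by_cases hpq : p = q
  · subst hpq
    simp only [stiffness, Matrix.of_apply]
    rw [if_true]
    have step1 : ∀ i, i ≠ p →
        (∑ j ∈ Finset.univ.filter (fun j => j ≠ i),
          k i j / 2 * (gvec x i j (p, a) * gvec x i j (p, b)))
        = k p i / 2 * (unitDir (x p) (x i) a * unitDir (x p) (x i) b) := by
      intro i hip
      rw [Finset.sum_eq_single_of_mem p (by simp [Ne.symm hip])]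
      · have : ∀ c, gvec x i p (p, c) = unitDir (x p) (x i) c := by
          intro c
          simp only [gvec, if_neg (Ne.symm hip), if_pos rfl, if_true]
          rw [unitDir_symm (x i) (x p) c]
          ring
        rw [this a, this b, hk i p]
      · intro j _ hjp
        simp [gvec, Ne.symm hip, Ne.symm hjp]
    rw [← Finset.add_sum_erase _ _ (Finset.mem_univ p)]
    have step2 : (∑ j ∈ Finset.univ.filter (fun j => j ≠ p),
        k p j / 2 * (gvec x p j (p, a) * gvec x p j (p, b)))
        = ∑ j ∈ Finset.univ.filter (fun j => j ≠ p),
          k p j / 2 * (unitDir (x p) (x j) a * unitDir (x p) (x j) b) := by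
      apply Finset.sum_congr rfl
      intro j hj
      rw [Finset.mem_filter] at hj
      have : ∀ c, gvec x p j (p, c) = unitDir (x p) (x j) c := by
        intro c
        simp [gvec, Ne.symm hj.2]
      rw [this a, this b]
    rw [step2]
    have step3 : (∑ i ∈ Finset.univ.erase p,
        ∑ j ∈ Finset.univ.filter (fun j => j ≠ i),
          k i j / 2 * (gvec x i j (p, a) * gvec x i j (p, b)))
        = ∑ i ∈ Finset.univ.erase p,
          k p i / 2 * (unitDir (x p) (x i) a * unitDir (x p) (x i) b) := by
      apply Finset.sum_congr rfl
      intro i hi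
      exact step1 i (Finset.ne_of_mem_erase hi)
    rw [step3, ← Finset.filter_ne' Finset.univ p, ← Finset.sum_add_distrib]
    apply Finset.sum_congr rfl
    intro j _
    ring
  · have hpq' : (p, a).1 ≠ (q, b).1 := hpq
    rw [show (stiffness x k) (p, a) (q, b) =
      -(k p q * (unitDir (x p) (x q) a * unitDir (x p) (x q) b)) from
        by simp only [stiffness, Matrix.of_apply, if_neg hpq']]
    have hz : ∀ i ∈ Finset.univ, i ∉ ({p, q} : Finset ι) →
        (∑ j ∈ Finset.univ.filter (fun j => j ≠ i),
          k i j / 2 * (gvec x i j (p, a) * gvec x i j (q, b))) = 0 := by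
      intro i _ hi
      rw [Finset.mem_insert, Finset.mem_singleton] at hi
      push_neg at hi
      apply Finset.sum_eq_zero
      intro j _
      by_cases hjp : p = j
      · subst hjp
        have : gvec x i p (q, b) = 0 := by simp [gvec, Ne.symm hi.2, Ne.symm hpq]
        rw [this]; ring
      · have : gvec x i j (p, a) = 0 := by simp [gvec, Ne.symm hi.1, hjp]
        rw [this]; ring
    rw [← Finset.sum_subset (Finset.subset_univ ({p, q} : Finset ι)) hz,
      Finset.sum_pair hpq]
    have e1 : (∑ j ∈ Finset.univ.filter (fun j => j ≠ p),
        k p j / 2 * (gvec x p j (p, a) * gvec x p j (q, b)))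
        = -(k p q / 2 * (unitDir (x p) (x q) a * unitDir (x p) (x q) b)) := by
      rw [Finset.sum_eq_single_of_mem q (by simp [Ne.symm hpq])]
      · have h1 : gvec x p q (p, a) = unitDir (x p) (x q) a := by
          simp [gvec, hpq]
        have h2 : gvec x p q (q, b) = - unitDir (x p) (x q) b := by
          simp only [gvec, if_neg (Ne.symm hpq)]
          simp
        rw [h1, h2]; ring
      · intro j _ hjq
        have : gvec x p j (q, b) = 0 := by simp [gvec, Ne.symm hpq, Ne.symm hjq]
        rw [this]; ring
    have e2 : (∑ j ∈ Finset.univ.filter (fun j => j ≠ q),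
        k q j / 2 * (gvec x q j (p, a) * gvec x q j (q, b)))
        = -(k p q / 2 * (unitDir (x p) (x q) a * unitDir (x p) (x q) b)) := by
      rw [Finset.sum_eq_single_of_mem p (by simp [hpq])]
      · have h1 : gvec x q p (p, a) = - unitDir (x q) (x p) a := by
          simp only [gvec, if_neg hpq, if_pos rfl, if_true]
          ring
        have h2 : gvec x q p (q, b) = unitDir (x q) (x p) b := by
          simp [gvec, Ne.symm hpq]
        rw [h1, h2, hk q p]
        linear_combination (-(k p q / 2)) * unitDir_symm_mul (x p) (x q) a b
      · intro j _ hjp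
        have : gvec x q j (p, a) = 0 := by simp [gvec, hpq, Ne.symm hjp]
        rw [this]; ring
    rw [e1, e2]; ring

lemma sum_mulVec' {β : Type*} {n m : Type*} [Fintype n] [Fintype m]
    (s : Finset β) (A : β → Matrix m n ℝ) (v : n → ℝ) :
    (∑ i ∈ s, A i) *ᵥ v = ∑ i ∈ s, A i *ᵥ v := by
  funext i
  simp only [Matrix.mulVec, dotProduct, Matrix.sum_apply, Finset.sum_apply,
    Finset.sum_mul]
  rw [Finset.sum_comm]

lemma vecMulVec_mulVec' {n : Type*} [Fintype n] (w v u : n → ℝ) :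
    Matrix.vecMulVec w v *ᵥ u = (v ⬝ᵥ u) • w := by
  funext i
  simp only [Matrix.mulVec, dotProduct, Matrix.vecMulVec_apply, Pi.smul_apply,
    smul_eq_mul]
  rw [Finset.sum_mul]
  apply Finset.sum_congr rfl
  intro j _
  ring

lemma dotProduct_finset_sum {β n : Type*} [Fintype n] (v : n → ℝ) (s : Finset β)
    (w : β → n → ℝ) : v ⬝ᵥ (∑ i ∈ s, w i) = ∑ i ∈ s, v ⬝ᵥ w i := by
  simp only [dotProduct, Finset.sum_apply, Finset.mul_sum]
  rw [Finset.sum_comm]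

lemma stiffness_posSemidef (x : ι → Fin d → ℝ) (k : ι → ι → ℝ)
    (hk : ∀ i j, k i j = k j i) (hk0 : ∀ i j, 0 ≤ k i j) :
    (stiffness x k).PosSemidef := by
  refine Matrix.PosSemidef.of_dotProduct_mulVec_nonneg (stiffness_isHermitian x k hk) (fun v => ?_)
  rw [stiffness_eq_sum x k hk, sum_mulVec', dotProduct_finset_sum]
  apply Finset.sum_nonneg
  intro i _
  rw [sum_mulVec', dotProduct_finset_sum]
  apply Finset.sum_nonneg
  intro j _
  rw [Matrix.smul_mulVec, vecMulVec_mulVec']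
  rw [dotProduct_smul, dotProduct_smul]
  simp only [smul_eq_mul, star_trivial]
  rw [dotProduct_comm v (gvec x i j)]
  have : 0 ≤ k i j / 2 := by linarith [hk0 i j]
  nlinarith [mul_self_nonneg (gvec x i j ⬝ᵥ v)]

end Aux

section Penrose

variable {n : Type*} [Fintype n] [DecidableEq n]

lemma isHermitian_exists_penrose {A : Matrix n n ℝ} (hA : A.IsHermitian) :
    ∃ X : Matrix n n ℝ,
      A * X * A = A ∧ X * A * X = X ∧ (A * X)ᵀ = A * X ∧ (X * A)ᵀ = X * A := by
  classical
  set U : Matrix n n ℝ := (hA.eigenvectorUnitary : Matrix n n ℝ) with hUdef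
  have hUU : star U * U = 1 := Unitary.coe_star_mul_self hA.eigenvectorUnitary
  set lam : n → ℝ := hA.eigenvalues with hlam
  have hspec : A = U * Matrix.diagonal lam * star U := by
    have := hA.spectral_theorem
    simpa using this
  set X : Matrix n n ℝ := U * Matrix.diagonal (fun i => (lam i)⁻¹) * star U with hX
  have key : ∀ f g : n → ℝ,
      (U * Matrix.diagonal f * star U) * (U * Matrix.diagonal g * star U) =
        U * Matrix.diagonal (fun i => f i * g i) * star U := by
    intro f g
    calc (U * Matrix.diagonal f * star U) * (U * Matrix.diagonal g * star U)
        = U * Matrix.diagonal f * (star U * U) * Matrix.diagonal g * star U := by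
          simp only [Matrix.mul_assoc]
      _ = U * (Matrix.diagonal f * Matrix.diagonal g) * star U := by
          rw [hUU]; simp only [Matrix.mul_assoc, Matrix.one_mul]
      _ = U * Matrix.diagonal (fun i => f i * g i) * star U := by
          rw [Matrix.diagonal_mul_diagonal]
  have hsymm : ∀ f : n → ℝ, (U * Matrix.diagonal f * star U)ᵀ =
      U * Matrix.diagonal f * star U := by
    intro f
    have hstar : star U = Uᵀ := Matrix.conjTranspose_eq_transpose_of_trivial U
    rw [hstar, Matrix.transpose_mul, Matrix.transpose_mul, Matrix.transpose_transpose,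
      Matrix.diagonal_transpose, Matrix.mul_assoc]
  have hfun : ∀ f g : n → ℝ, f = g →
      U * Matrix.diagonal f * star U = U * Matrix.diagonal g * star U := by
    intro f g h; rw [h]
  refine ⟨X, ?_, ?_, ?_, ?_⟩
  · rw [hspec, hX, key, key]
    apply hfun
    funext i
    by_cases h : lam i = 0
    · simp [h]
    · rw [mul_inv_cancel₀ h, one_mul]
  · rw [hspec, hX, key, key]
    apply hfun
    funext i
    by_cases h : lam i = 0
    · simp [h]
    · rw [inv_mul_cancel₀ h, one_mul]
  · rw [hspec, hX, key]; exact hsymm _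
  · rw [hspec, hX, key]; exact hsymm _

lemma penrose_unique {A X Y : Matrix n n ℝ}
    (h1 : A * X * A = A) (h2 : X * A * X = X) (h3 : (A * X)ᵀ = A * X) (h4 : (X * A)ᵀ = X * A)
    (g1 : A * Y * A = A) (g2 : Y * A * Y = Y) (g3 : (A * Y)ᵀ = A * Y) (g4 : (Y * A)ᵀ = Y * A) :
    X = Y := by
  have hax : A * X = A * Y := by
    calc A * X = (A * X)ᵀ := h3.symm
      _ = ((A * Y * A) * X)ᵀ := by rw [g1]
      _ = ((A * Y) * (A * X))ᵀ := by
            rw [show A * Y * A * X = (A * Y) * (A * X) by simp [Matrix.mul_assoc]]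
      _ = (A * X)ᵀ * (A * Y)ᵀ := Matrix.transpose_mul _ _
      _ = (A * X) * (A * Y) := by rw [h3, g3]
      _ = (A * X * A) * Y := by simp [Matrix.mul_assoc]
      _ = A * Y := by rw [h1]
  have hxa : X * A = Y * A := by
    calc X * A = (X * A)ᵀ := h4.symm
      _ = (X * (A * Y * A))ᵀ := by rw [g1]
      _ = ((X * A) * (Y * A))ᵀ := by
            rw [show X * (A * Y * A) = (X * A) * (Y * A) by simp [Matrix.mul_assoc]]
      _ = (Y * A)ᵀ * (X * A)ᵀ := Matrix.transpose_mul _ _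
      _ = (Y * A) * (X * A) := by rw [h4, g4]
      _ = Y * (A * X * A) := by simp [Matrix.mul_assoc]
      _ = Y * A := by rw [h1]
  calc X = X * A * X := h2.symm
    _ = Y * A * X := by rw [hxa]
    _ = Y * (A * X) := by rw [Matrix.mul_assoc]
    _ = Y * (A * Y) := by rw [hax]
    _ = Y * A * Y := by rw [Matrix.mul_assoc]
    _ = Y := g2

lemma mpinv_spec {A : Matrix n n ℝ} (hA : A.IsHermitian) :
    A * mpinv A * A = A ∧ mpinv A * A * mpinv A = mpinv A ∧
      (A * mpinv A)ᵀ = A * mpinv A ∧ (mpinv A * A)ᵀ = mpinv A * A := by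
  have h := isHermitian_exists_penrose hA
  unfold mpinv
  rw [dif_pos h]
  exact h.choose_spec

lemma mpinv_transpose_eq {A : Matrix n n ℝ} (hA : A.IsHermitian) :
    (mpinv A)ᵀ = mpinv A := by
  have hAt : Aᵀ = A := by
    rw [← Matrix.conjTranspose_eq_transpose_of_trivial]; exact hA
  obtain ⟨p1, p2, p3, p4⟩ := mpinv_spec hA
  set X := mpinv A with hXdef
  refine penrose_unique (A := A) ?_ ?_ ?_ ?_ p1 p2 p3 p4
  · rw [← Matrix.transpose_inj]
    simp only [Matrix.transpose_mul, Matrix.transpose_transpose, hAt]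
    rw [← Matrix.mul_assoc]
    exact p1
  · rw [← Matrix.transpose_inj]
    simp only [Matrix.transpose_mul, Matrix.transpose_transpose, hAt]
    rw [← Matrix.mul_assoc]
    exact p2
  · rw [Matrix.transpose_mul, Matrix.transpose_transpose, hAt]
    conv_rhs => rw [← hAt]
    rw [← Matrix.transpose_mul]
    exact p4.symm
  · rw [Matrix.transpose_mul, Matrix.transpose_transpose, hAt]
    conv_rhs => rw [← hAt]
    rw [← Matrix.transpose_mul]
    exact p3.symm

lemma mpinv_comm {A : Matrix n n ℝ} (hA : A.IsHermitian) :
    A * mpinv A = mpinv A * A := by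
  have hAt : Aᵀ = A := by
    rw [← Matrix.conjTranspose_eq_transpose_of_trivial]; exact hA
  obtain ⟨p1, p2, p3, p4⟩ := mpinv_spec hA
  calc A * mpinv A = (A * mpinv A)ᵀ := p3.symm
    _ = (mpinv A)ᵀ * Aᵀ := Matrix.transpose_mul _ _
    _ = mpinv A * A := by rw [mpinv_transpose_eq hA, hAt]

end Penrose

section Blocks

variable {d : ℕ}

lemma isHermitian_entry {n : Type*} {K : Matrix n n ℝ} (hK : K.IsHermitian) (i j : n) :
    K j i = K i j := by
  conv_lhs => rw [← hK]
  simp [Matrix.conjTranspose_apply]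

lemma blk_isHermitian {ι κ : Type*} (K : Matrix (ι × Fin d) (ι × Fin d) ℝ)
    (hK : K.IsHermitian) (f : κ → ι) : (blk K f f).IsHermitian := by
  apply Matrix.IsHermitian.ext
  intro p q
  rw [star_trivial]
  exact isHermitian_entry hK _ _

lemma blk_transpose_of_herm {ι κ₁ κ₂ : Type*} (K : Matrix (ι × Fin d) (ι × Fin d) ℝ)
    (hK : K.IsHermitian) (f : κ₁ → ι) (g : κ₂ → ι) :
    blk K g f = (blk K f g)ᵀ := by
  ext p q
  rw [Matrix.transpose_apply]
  exact isHermitian_entry hK _ _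

variable {ι₁ ι₂ : Type*} [Fintype ι₁] [Fintype ι₂]

lemma mulVec_glue_inl (K : Matrix ((ι₁ ⊕ ι₂) × Fin d) ((ι₁ ⊕ ι₂) × Fin d) ℝ)
    (u1 : ι₁ × Fin d → ℝ) (u2 : ι₂ × Fin d → ℝ) (i : ι₁) (a : Fin d) :
    (K *ᵥ glue u1 u2) (Sum.inl i, a) =
      (blk K Sum.inl Sum.inl *ᵥ u1) (i, a) + (blk K Sum.inl Sum.inr *ᵥ u2) (i, a) := by
  simp only [Matrix.mulVec, dotProduct, blk, glue, Matrix.submatrix_apply,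
    Fintype.sum_prod_type, Fintype.sum_sum_type, Sum.elim_inl, Sum.elim_inr,
    Prod.map_apply, id_eq]

lemma mulVec_glue_inr (K : Matrix ((ι₁ ⊕ ι₂) × Fin d) ((ι₁ ⊕ ι₂) × Fin d) ℝ)
    (u1 : ι₁ × Fin d → ℝ) (u2 : ι₂ × Fin d → ℝ) (l : ι₂) (a : Fin d) :
    (K *ᵥ glue u1 u2) (Sum.inr l, a) =
      (blk K Sum.inr Sum.inl *ᵥ u1) (l, a) + (blk K Sum.inr Sum.inr *ᵥ u2) (l, a) := by
  simp only [Matrix.mulVec, dotProduct, blk, glue, Matrix.submatrix_apply,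
    Fintype.sum_prod_type, Fintype.sum_sum_type, Sum.elim_inl, Sum.elim_inr,
    Prod.map_apply, id_eq]

lemma glue_dotProduct' (u1 : ι₁ × Fin d → ℝ) (u2 : ι₂ × Fin d → ℝ)
    (w : (ι₁ ⊕ ι₂) × Fin d → ℝ) :
    glue u1 u2 ⬝ᵥ w =
      (u1 ⬝ᵥ fun q => w (Sum.inl q.1, q.2)) + (u2 ⬝ᵥ fun q => w (Sum.inr q.1, q.2)) := by
  simp only [dotProduct, glue, Fintype.sum_prod_type, Fintype.sum_sum_type,
    Sum.elim_inl, Sum.elim_inr]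

lemma psd_kernel_blk (S : Matrix ((ι₁ ⊕ ι₂) × Fin d) ((ι₁ ⊕ ι₂) × Fin d) ℝ)
    (hS : S.PosSemidef) (v : ι₂ × Fin d → ℝ)
    (hv : blk S Sum.inr Sum.inr *ᵥ v = 0) :
    blk S Sum.inl Sum.inr *ᵥ v = 0 := by
  have hrows : ∀ q : ι₂ × Fin d, (S *ᵥ glue (0 : ι₁ × Fin d → ℝ) v) (Sum.inr q.1, q.2) = 0 := by
    intro q
    rw [show (Sum.inr q.1, q.2) = (Sum.inr q.1, q.2) from rfl, mulVec_glue_inr]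
    rw [Matrix.mulVec_zero]
    simp [congrFun hv q]
  have hq : star (glue (0 : ι₁ × Fin d → ℝ) v) ⬝ᵥ (S *ᵥ glue (0 : ι₁ × Fin d → ℝ) v) = 0 := by
    have hst : star (glue (0 : ι₁ × Fin d → ℝ) v) = glue (0 : ι₁ × Fin d → ℝ) v := by
      funext p; simp
    rw [hst, glue_dotProduct']
    rw [zero_dotProduct]
    have : (fun q : ι₂ × Fin d => (S *ᵥ glue (0 : ι₁ × Fin d → ℝ) v) (Sum.inr q.1, q.2)) = 0 := by
      funext q; exact hrows q
    rw [this, dotProduct_zero]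
    ring
  have hw := (hS.dotProduct_mulVec_zero_iff (glue (0 : ι₁ × Fin d → ℝ) v)).mp hq
  funext p
  have h := congrFun hw (Sum.inl p.1, p.2)
  rw [show ((Sum.inl p.1 : ι₁ ⊕ ι₂), p.2) = (Sum.inl p.1, p.2) from rfl, mulVec_glue_inl] at h
  rw [Matrix.mulVec_zero] at h
  simpa using h

lemma psd_kernel_blk_mul (S : Matrix ((ι₁ ⊕ ι₂) × Fin d) ((ι₁ ⊕ ι₂) × Fin d) ℝ)
    (hS : S.PosSemidef) (N : Matrix (ι₂ × Fin d) (ι₂ × Fin d) ℝ)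
    (hN : blk S Sum.inr Sum.inr * N = 0) :
    blk S Sum.inl Sum.inr * N = 0 := by
  ext p q
  have hv : blk S Sum.inr Sum.inr *ᵥ (fun r => N r q) = 0 := by
    funext r
    have h := congrFun (congrFun hN r) q
    simpa [Matrix.mul_apply, Matrix.mulVec, dotProduct] using h
  have h2 := psd_kernel_blk S hS _ hv
  have h3 := congrFun h2 p
  simpa [Matrix.mul_apply, Matrix.mulVec, dotProduct] using h3

lemma resid_apply {ι : Type*} [Fintype ι] [DecidableEq ι]
    (S : Matrix (ι × Fin d) (ι × Fin d) ℝ) (m : ι → ℝ) (ω : ℝ)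
    (g : ι × Fin d → ℝ) (s : ι) (a : Fin d) :
    ((S - ω ^ 2 • Matrix.diagonal (fun p : ι × Fin d => m p.1)) *ᵥ g) (s, a) =
      (S *ᵥ g) (s, a) - ω ^ 2 * (m s * g (s, a)) := by
  rw [Matrix.sub_mulVec]
  simp [Matrix.smul_mulVec, Matrix.mulVec_diagonal]

end Blocks

/-- away from resonance, `K̃_JJ - ω² M_JJ` is invertible, the
forces at all interior nodes can be equilibrated, and the resulting net forces
at the terminals are given by
`W(ω) = K̃_BB - ω² M_BB - K̃_BJ (K̃_JJ - ω² M_JJ)⁻¹ K̃_JB`. -/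
theorem dynamic_response_equilibration {d : ℕ} (hd : d = 2 ∨ d = 3)
    {B J L : Type*} [Fintype B] [Fintype J] [Fintype L]
    [DecidableEq B] [DecidableEq J] [DecidableEq L]
    (x : ((B ⊕ J) ⊕ L) → Fin d → ℝ) (k : ((B ⊕ J) ⊕ L) → ((B ⊕ J) ⊕ L) → ℝ)
    (hnet : IsSpringNetwork x k) (m : ((B ⊕ J) ⊕ L) → ℝ)
    (hmB : ∀ b, 0 ≤ m (Sum.inl (Sum.inl b)))
    (hmJ : ∀ j, 0 < m (Sum.inl (Sum.inr j)))
    (hmL : ∀ l, m (Sum.inr l) = 0)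
    (ω : ℝ)
    (hres : ∀ v : J × Fin d → ℝ,
      (Matrix.diagonal (fun p : J × Fin d => (Real.sqrt (m (Sum.inl (Sum.inr p.1))))⁻¹) *
        blk (dynKtilde x k) Sum.inr Sum.inr *
        Matrix.diagonal (fun p : J × Fin d => (Real.sqrt (m (Sum.inl (Sum.inr p.1))))⁻¹))
          *ᵥ v = ω ^ 2 • v → v = 0) :
    IsUnit (blk (dynKtilde x k) Sum.inr Sum.inr - ω ^ 2 • massJJ m) ∧
    ∀ uB : B × Fin d → ℝ, ∃ (uJ : J × Fin d → ℝ) (uL : L × Fin d → ℝ),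
      (∀ (j : J) (a : Fin d),
        ((stiffness x k - ω ^ 2 • Matrix.diagonal (fun p => m p.1)) *ᵥ
          glue (glue uB uJ) uL) (Sum.inl (Sum.inr j), a) = 0) ∧
      (∀ (l : L) (a : Fin d),
        ((stiffness x k - ω ^ 2 • Matrix.diagonal (fun p => m p.1)) *ᵥ
          glue (glue uB uJ) uL) (Sum.inr l, a) = 0) ∧
      (∀ (b : B) (a : Fin d),
        ((stiffness x k - ω ^ 2 • Matrix.diagonal (fun p => m p.1)) *ᵥ
          glue (glue uB uJ) uL) (Sum.inl (Sum.inl b), a) =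
        (dynResponse x k m ω *ᵥ uB) (b, a)) := by
  classical
  obtain ⟨hxinj, hksymm, hknn⟩ := hnet
  have hherm : (stiffness x k).IsHermitian := stiffness_isHermitian x k hksymm
  have hpsd : (stiffness x k).PosSemidef := stiffness_posSemidef x k hksymm hknn
  set S : Matrix (((B ⊕ J) ⊕ L) × Fin d) (((B ⊕ J) ⊕ L) × Fin d) ℝ := stiffness x k with hSdef
  set A := blk S Sum.inl Sum.inl with hAdef
  set C := blk S Sum.inl Sum.inr with hCdef
  set Ct := blk S Sum.inr Sum.inl with hCtdef
  set D := blk S Sum.inr Sum.inr with hDdef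
  set X := mpinv D with hXdef
  have hKt : dynKtilde x k = A - C * X * Ct := rfl
  have hDh : D.IsHermitian := blk_isHermitian S hherm Sum.inr
  obtain ⟨p1, p2, p3, p4⟩ := mpinv_spec hDh
  have hcomm : D * X = X * D := mpinv_comm hDh
  have hCtC : Ct = Cᵀ := blk_transpose_of_herm S hherm Sum.inl Sum.inr
  have hDXCt : D * (X * Ct) = Ct := by
    have hker : C * (1 - X * D) = 0 := by
      apply psd_kernel_blk_mul S hpsd
      rw [Matrix.mul_sub, Matrix.mul_one, ← Matrix.mul_assoc, p1, sub_self]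
    have ht := congrArg Matrix.transpose hker
    rw [Matrix.transpose_mul, Matrix.transpose_zero, Matrix.transpose_sub,
      Matrix.transpose_one, p4, ← hCtC, Matrix.sub_mul, Matrix.one_mul, sub_eq_zero] at ht
    rw [← Matrix.mul_assoc, hcomm]
    exact ht.symm
  -- invertibility of G
  have hGker : ∀ v : J × Fin d → ℝ,
      (blk (dynKtilde x k) Sum.inr Sum.inr - ω ^ 2 • massJJ m) *ᵥ v = 0 → v = 0 := by
    intro v hv
    have hsqpos : ∀ p : J × Fin d, 0 < Real.sqrt (m (Sum.inl (Sum.inr p.1))) :=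
      fun p => Real.sqrt_pos.mpr (hmJ p.1)
    have hKv : blk (dynKtilde x k) Sum.inr Sum.inr *ᵥ v =
        ω ^ 2 • (Matrix.diagonal (fun p : J × Fin d => m (Sum.inl (Sum.inr p.1))) *ᵥ v) := by
      rw [Matrix.sub_mulVec, Matrix.smul_mulVec, sub_eq_zero] at hv
      exact hv
    set w : J × Fin d → ℝ := fun p => Real.sqrt (m (Sum.inl (Sum.inr p.1))) * v p with hwdef
    have hw0 : w = 0 := by
      apply hres
      have hDinvw : Matrix.diagonal
          (fun p : J × Fin d => (Real.sqrt (m (Sum.inl (Sum.inr p.1))))⁻¹) *ᵥ w = v := by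
        funext p
        rw [Matrix.mulVec_diagonal]
        simp only [hwdef]
        rw [← mul_assoc, inv_mul_cancel₀ (ne_of_gt (hsqpos p)), one_mul]
      have hkey : ∀ p : J × Fin d,
          (Real.sqrt (m (Sum.inl (Sum.inr p.1))))⁻¹ * m (Sum.inl (Sum.inr p.1)) =
            Real.sqrt (m (Sum.inl (Sum.inr p.1))) := by
        intro p
        rw [inv_mul_eq_div, div_eq_iff (ne_of_gt (hsqpos p))]
        exact (Real.mul_self_sqrt (le_of_lt (hmJ p.1))).symm
      rw [← Matrix.mulVec_mulVec, ← Matrix.mulVec_mulVec, hDinvw, hKv, Matrix.mulVec_smul]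
      funext p
      rw [Pi.smul_apply, Pi.smul_apply, Matrix.mulVec_diagonal, Matrix.mulVec_diagonal]
      simp only [hwdef, smul_eq_mul]
      linear_combination (ω ^ 2 * v p) * hkey p
    funext p
    have := congrFun hw0 p
    rw [hwdef] at this
    have h2 : Real.sqrt (m (Sum.inl (Sum.inr p.1))) * v p = 0 := this
    rcases mul_eq_zero.mp h2 with h | h
    · exact absurd h (ne_of_gt (hsqpos p))
    · exact h
  have hGdet : IsUnit (blk (dynKtilde x k) Sum.inr Sum.inr - ω ^ 2 • massJJ m).det := by
    rw [isUnit_iff_ne_zero]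
    intro h
    obtain ⟨v, hv0, hGv⟩ := Matrix.exists_mulVec_eq_zero_iff.mpr h
    exact hv0 (hGker v hGv)
  have hGunit : IsUnit (blk (dynKtilde x k) Sum.inr Sum.inr - ω ^ 2 • massJJ m) :=
    (Matrix.isUnit_iff_isUnit_det _).mpr hGdet
  refine ⟨hGunit, ?_⟩
  intro uB
  set G := blk (dynKtilde x k) Sum.inr Sum.inr - ω ^ 2 • massJJ m with hGdef
  set uJ : J × Fin d → ℝ := -(G⁻¹ *ᵥ (blk (dynKtilde x k) Sum.inr Sum.inl *ᵥ uB)) with hUJ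
  set uP : (B ⊕ J) × Fin d → ℝ := glue uB uJ with hUP
  set uL : L × Fin d → ℝ := -(X *ᵥ (Ct *ᵥ uP)) with hUL
  have hGuJ : G *ᵥ uJ = -(blk (dynKtilde x k) Sum.inr Sum.inl *ᵥ uB) := by
    rw [hUJ, Matrix.mulVec_neg, Matrix.mulVec_mulVec, Matrix.mul_nonsing_inv _ hGdet,
      Matrix.one_mulVec]
  have hrow1 : ∀ (s : B ⊕ J) (a : Fin d),
      (S *ᵥ glue uP uL) (Sum.inl s, a) = (dynKtilde x k *ᵥ uP) (s, a) := by
    intro s a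
    rw [mulVec_glue_inl]
    rw [hUL, Matrix.mulVec_neg, Matrix.mulVec_mulVec, Matrix.mulVec_mulVec]
    rw [hKt, Matrix.sub_mulVec]
    simp only [← hAdef, ← hCdef, Pi.add_apply, Pi.neg_apply, Pi.sub_apply]
    ring
  have hrow2 : ∀ (l : L) (a : Fin d), (S *ᵥ glue uP uL) (Sum.inr l, a) = 0 := by
    intro l a
    rw [mulVec_glue_inr]
    rw [hUL, Matrix.mulVec_neg, Matrix.mulVec_mulVec, Matrix.mulVec_mulVec,
      Matrix.mul_assoc, hDXCt]
    simp [← hCtdef]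
  refine ⟨uJ, uL, ?_, ?_, ?_⟩
  · intro j a
    rw [resid_apply, hrow1, hUP, mulVec_glue_inr]
    have hGrow := congrFun hGuJ (j, a)
    rw [hGdef, Matrix.sub_mulVec, Matrix.smul_mulVec] at hGrow
    have hmass : (massJJ m *ᵥ uJ) (j, a) = m (Sum.inl (Sum.inr j)) * uJ (j, a) := by
      rw [massJJ, Matrix.mulVec_diagonal]
    simp only [Pi.sub_apply, Pi.smul_apply, Pi.neg_apply, smul_eq_mul] at hGrow
    rw [hmass] at hGrow
    have hglue : glue (glue uB uJ) uL (Sum.inl (Sum.inr j), a) = uJ (j, a) := rfl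
    rw [hglue]
    linarith [hGrow]
  · intro l a
    rw [resid_apply, hrow2, hmL l]
    ring
  · intro b a
    rw [resid_apply, hrow1, hUP, mulVec_glue_inl]
    have hBJ : (blk (dynKtilde x k) Sum.inl Sum.inr *ᵥ uJ) (b, a) =
        -(((blk (dynKtilde x k) Sum.inl Sum.inr * G⁻¹ *
            blk (dynKtilde x k) Sum.inr Sum.inl) *ᵥ uB) (b, a)) := by
      rw [hUJ, Matrix.mulVec_neg, Matrix.mulVec_mulVec, Matrix.mulVec_mulVec]
      simp
    rw [hBJ]
    rw [show dynResponse x k m ω =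
      blk (dynKtilde x k) Sum.inl Sum.inl - ω ^ 2 • massBB m -
        blk (dynKtilde x k) Sum.inl Sum.inr * G⁻¹ * blk (dynKtilde x k) Sum.inr Sum.inl from rfl]
    rw [Matrix.sub_mulVec, Matrix.sub_mulVec, Matrix.smul_mulVec]
    have hmass : (massBB m *ᵥ uB) (b, a) = m (Sum.inl (Sum.inl b)) * uB (b, a) := by
      rw [massBB, Matrix.mulVec_diagonal]
    have hglue : glue (glue uB uJ) uL (Sum.inl (Sum.inl b), a) = uB (b, a) := rfl
    simp only [Pi.sub_apply, Pi.smul_apply, smul_eq_mul, hmass, hglue]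
    ring
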